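/- Let N' ⊊ N be submodules of M, and let p be the ≼-least element of the set Ass(N/N') of associated primes of N/N' (a finite nonempty set since R is Noetherian and N/N' is a nonzero finitely generated R-module). Then: (i) for every submodule N'' with N' ⊆ N'' ⊊ N and every associated prime q of N/N'', one has p ≼ q; (ii) there exists a submodule N'' with N' ⊆ N'' ⊊ N such that the set of associated primes of N/N'' equals {p}. -/

import Mathlib

open Submodule

section aux

variable {R : Type*} [CommRing R] {M : Type*} [AddCommGroup M] [Module R M]

lemma stmt9_ass_iff [IsNoetherianRing R] {I : Ideal R} :
    I ∈ associatedPrimes R M ↔ I.IsPrime ∧ ∃ x : M, I = (R ∙ x).annihilator := by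
  rw [AssociatedPrimes.mem_iff, isAssociatedPrime_iff]
  have h : ∀ x : M, (⊥ : Submodule R M).colon {x} = (R ∙ x).annihilator := by
    intro x
    ext r
    rw [mem_colon_singleton, mem_bot, mem_annihilator_span_singleton]
  simp only [h]

/-- If some cyclic submodule's annihilator lies inside a prime `q`, then some associated
prime lies inside `q`. -/
lemma stmt9_lemA [IsNoetherianRing R] (q : Ideal R) (hq : q.IsPrime) (x0 : M)
    (hx0 : (R ∙ x0).annihilator ≤ q) :
    ∃ P ∈ associatedPrimes R M, P ≤ q := by
  obtain ⟨P, ⟨hPq, y, rfl⟩, hmax⟩ :=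
    (set_has_maximal_iff_noetherian.mpr ‹IsNoetherianRing R›)
      {I : Ideal R | I ≤ q ∧ ∃ y : M, I = (R ∙ y).annihilator}
      ⟨(R ∙ x0).annihilator, hx0, x0, rfl⟩
  refine ⟨_, stmt9_ass_iff.mpr ⟨⟨fun h => hq.ne_top (top_unique (h ▸ hPq)), ?_⟩, y, rfl⟩, hPq⟩
  intro a b hab
  by_cases hb : b ∈ (R ∙ y).annihilator
  · exact Or.inr hb
  refine Or.inl ?_
  have hab' : (a * b) • y = 0 := (mem_annihilator_span_singleton y _).mp hab
  by_cases hbq : (R ∙ (b • y)).annihilator ≤ q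
  · have hle : (R ∙ y).annihilator ≤ (R ∙ (b • y)).annihilator := by
      intro r hr
      rw [mem_annihilator_span_singleton] at hr ⊢
      rw [smul_comm, hr, smul_zero]
    have heq : (R ∙ y).annihilator = (R ∙ (b • y)).annihilator :=
      hle.lt_or_eq.resolve_left (hmax _ ⟨hbq, b • y, rfl⟩)
    rw [heq, mem_annihilator_span_singleton, smul_smul]
    exact hab'
  · exfalso
    obtain ⟨s, hs, hsq⟩ := SetLike.not_le_iff_exists.mp hbq
    rw [mem_annihilator_span_singleton] at hs
    have hann : (R ∙ (s • y)).annihilator ≤ q := by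
      intro r hr
      rw [mem_annihilator_span_singleton, smul_smul] at hr
      have : r * s ∈ (R ∙ y).annihilator := (mem_annihilator_span_singleton y _).mpr hr
      exact (hq.mem_or_mem (hPq this)).resolve_right hsq
    have hle : (R ∙ y).annihilator ≤ (R ∙ (s • y)).annihilator := by
      intro r hr
      rw [mem_annihilator_span_singleton] at hr ⊢
      rw [smul_comm, hr, smul_zero]
    have heq : (R ∙ y).annihilator = (R ∙ (s • y)).annihilator :=
      hle.lt_or_eq.resolve_left (hmax _ ⟨hann, s • y, rfl⟩)
    apply hb
    rw [heq, mem_annihilator_span_singleton, smul_comm]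
    exact hs

/-- Associated primes of `M` lie in those of a submodule or of the quotient. -/
lemma stmt9_lemB [IsNoetherianRing R] (K : Submodule R M) :
    associatedPrimes R M ⊆ associatedPrimes R K ∪ associatedPrimes R (M ⧸ K) := by
  rintro q hq'
  obtain ⟨hq, x, rfl⟩ := stmt9_ass_iff.mp hq'
  by_cases h : ∃ r : R, r • x ∈ K ∧ r • x ≠ 0
  · obtain ⟨r, hrK, hr0⟩ := h
    have hrq : r ∉ (R ∙ x).annihilator := fun hr =>
      hr0 ((mem_annihilator_span_singleton x r).mp hr)
    left
    refine stmt9_ass_iff.mpr ⟨hq, ⟨r • x, hrK⟩, ?_⟩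
    ext s
    rw [mem_annihilator_span_singleton, mem_annihilator_span_singleton]
    constructor
    · intro hs
      have hs' : s • (r • x) = 0 := by rw [smul_comm, hs, smul_zero]
      exact Subtype.ext (by simpa using hs')
    · intro hs
      have hs' : s • (r • x) = 0 := by simpa using congrArg Subtype.val hs
      rw [smul_smul] at hs'
      have hmul : s * r ∈ (R ∙ x).annihilator := (mem_annihilator_span_singleton x _).mpr hs'
      exact (mem_annihilator_span_singleton x s).mp ((hq.mem_or_mem hmul).resolve_right hrq)
  · right
    push_neg at h
    refine stmt9_ass_iff.mpr ⟨hq, K.mkQ x, ?_⟩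
    ext s
    rw [mem_annihilator_span_singleton, mem_annihilator_span_singleton, ← map_smul,
      Submodule.mkQ_apply, Submodule.Quotient.mk_eq_zero]
    exact ⟨fun hs => hs ▸ K.zero_mem, h s⟩

/-- Existence of a submodule whose quotient has exactly one prescribed associated prime. -/
lemma stmt9_lemC {X : Type*} [AddCommGroup X] [Module R X] [IsNoetherianRing R]
    [IsNoetherian R X] (p : Ideal R) (hp : p ∈ associatedPrimes R X) :
    ∃ W : Submodule R X, associatedPrimes R (X ⧸ W) = {p} := by
  obtain ⟨W, hWS, hmax⟩ := (set_has_maximal_iff_noetherian.mpr ‹IsNoetherian R X›)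
    {W : Submodule R X | p ∉ associatedPrimes R W}
    ⟨⊥, by rw [Set.mem_setOf_eq, associatedPrimes.eq_empty_of_subsingleton]; exact
      Set.notMem_empty p⟩
  rw [Set.mem_setOf_eq] at hWS
  refine ⟨W, ?_⟩
  have hsub : associatedPrimes R (X ⧸ W) ⊆ {p} := by
    intro q hqmem
    rw [Set.mem_singleton_iff]
    by_contra hqp
    obtain ⟨hq, xb, hxb⟩ := stmt9_ass_iff.mp hqmem
    obtain ⟨x, rfl⟩ := W.mkQ_surjective xb
    have hxW : x ∉ W := by
      intro hx
      apply hq.ne_top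
      rw [hxb, Submodule.span_singleton_eq_bot.mpr
        (by rwa [Submodule.mkQ_apply, Submodule.Quotient.mk_eq_zero]),
        Submodule.annihilator_bot]
    set W' := W ⊔ (R ∙ x) with hW'def
    have hxW' : x ∈ W' := Submodule.mem_sup_right (mem_span_singleton_self x)
    have hWle : W ≤ W' := le_sup_left
    have hWW' : W < W' := lt_of_le_of_ne hWle (fun h => hxW (h ▸ hxW'))
    have hW'S : p ∈ associatedPrimes R W' := by
      by_contra h
      exact hmax W' h hWW'
    set K : Submodule R W' := W.comap W'.subtype with hKdef
    rcases stmt9_lemB K hW'S with hcase | hcase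
    · apply hWS
      rwa [LinearEquiv.AssociatedPrimes.eq (Submodule.comapSubtypeEquivOfLe hWle)] at hcase
    · -- `W' ⧸ K ≃ R ⧸ q`, so its only associated prime is `q`, while `p ∈ Ass(W' ⧸ K)`.
      set f : R →ₗ[R] (↥W' ⧸ K) := LinearMap.toSpanSingleton R _ (K.mkQ ⟨x, hxW'⟩) with hfdef
      have hfr : ∀ r : R, f r = K.mkQ ⟨r • x, W'.smul_mem r hxW'⟩ := by
        intro r
        show r • K.mkQ ⟨x, hxW'⟩ = _
        rw [← map_smul]
        rfl
      have hker : LinearMap.ker f = q := by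
        ext r
        rw [LinearMap.mem_ker, hfr, Submodule.mkQ_apply, Submodule.Quotient.mk_eq_zero]
        have : ((⟨r • x, W'.smul_mem r hxW'⟩ : W') ∈ K) ↔ r • x ∈ W := Iff.rfl
        rw [this, hxb, mem_annihilator_span_singleton, ← map_smul, Submodule.mkQ_apply,
          Submodule.Quotient.mk_eq_zero]
      have hsurj : Function.Surjective f := by
        intro z
        obtain ⟨⟨y, hy⟩, rfl⟩ := K.mkQ_surjective z
        obtain ⟨w, hw, z', hz', hsum⟩ := Submodule.mem_sup.mp hy
        obtain ⟨r, rfl⟩ := Submodule.mem_span_singleton.mp hz'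
        refine ⟨r, ?_⟩
        rw [hfr]
        rw [Submodule.mkQ_apply, Submodule.mkQ_apply, Submodule.Quotient.eq]
        show (r • x) - y ∈ W
        rw [← hsum]
        simpa using W.neg_mem hw
      have hAss : associatedPrimes R (↥W' ⧸ K) = {q} := by
        rw [← LinearEquiv.AssociatedPrimes.eq (f.quotKerEquivOfSurjective hsurj), hker,
          associatedPrimes.eq_singleton_of_isPrimary hq.isPrimary, hq.radical]
      rw [hAss, Set.mem_singleton_iff] at hcase
      exact hqp hcase.symm
  have hmem : p ∈ associatedPrimes R (X ⧸ W) := (stmt9_lemB W hp).resolve_left hWS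
  exact le_antisymm hsub (Set.singleton_subset_iff.mpr hmem)

end aux

theorem stmt9 {R M : Type*} [CommRing R] [IsNoetherianRing R]
    [AddCommGroup M] [Module R M] [Module.Finite R M] [Nontrivial M]
    -- a linear order on the prime ideals of `R` extending inclusion
    (le : Ideal R → Ideal R → Prop)
    (hrefl : ∀ p : Ideal R, p.IsPrime → le p p)
    (htrans : ∀ p q s : Ideal R, p.IsPrime → q.IsPrime → s.IsPrime →
      le p q → le q s → le p s)
    (hantisymm : ∀ p q : Ideal R, p.IsPrime → q.IsPrime → le p q → le q p → p = q)
    (htotal : ∀ p q : Ideal R, p.IsPrime → q.IsPrime → le p q ∨ le q p)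
    (hext : ∀ p q : Ideal R, p.IsPrime → q.IsPrime → p ≤ q → le p q)
    (N' N : Submodule R M) (hN'N : N' < N)
    -- `p` is the `≼`-least element of `Ass(N/N')`
    (p : Ideal R) (hp : p ∈ associatedPrimes R (↥N ⧸ N'.comap N.subtype))
    (hleast : ∀ q ∈ associatedPrimes R (↥N ⧸ N'.comap N.subtype), le p q) :
    -- (i)
    (∀ N'' : Submodule R M, N' ≤ N'' → N'' < N →
      ∀ q ∈ associatedPrimes R (↥N ⧸ N''.comap N.subtype), le p q) ∧
    -- (ii)
    (∃ N'' : Submodule R M, N' ≤ N'' ∧ N'' < N ∧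
      associatedPrimes R (↥N ⧸ N''.comap N.subtype) = {p}) := by
  constructor
  · -- part (i)
    intro N'' hN'' hN''N q hq
    obtain ⟨hqprime, z, hz⟩ := stmt9_ass_iff.mp hq
    obtain ⟨z0, rfl⟩ := (N''.comap N.subtype).mkQ_surjective z
    have hann : (R ∙ (N'.comap N.subtype).mkQ z0).annihilator ≤ q := by
      intro r hr
      rw [mem_annihilator_span_singleton, ← map_smul, Submodule.mkQ_apply,
        Submodule.Quotient.mk_eq_zero] at hr
      have hr' : r • z0 ∈ N''.comap N.subtype :=
        Submodule.comap_mono hN'' hr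
      rw [hz, mem_annihilator_span_singleton, ← map_smul, Submodule.mkQ_apply,
        Submodule.Quotient.mk_eq_zero]
      exact hr'
    obtain ⟨q', hq'mem, hq'le⟩ := stmt9_lemA q hqprime _ hann
    exact htrans p q' q hp.1 hq'mem.1 hqprime (hleast q' hq'mem)
      (hext q' q hq'mem.1 hqprime hq'le)
  · -- part (ii)
    obtain ⟨W, hW⟩ := stmt9_lemC p hp
    have hL0L : N'.comap N.subtype ≤ W.comap (N'.comap N.subtype).mkQ := by
      intro a ha
      show (N'.comap N.subtype).mkQ a ∈ W
      have h0 : (N'.comap N.subtype).mkQ a = 0 := by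
        rw [Submodule.mkQ_apply, Submodule.Quotient.mk_eq_zero]; exact ha
      rw [h0]; exact W.zero_mem
    have hmapL : (W.comap (N'.comap N.subtype).mkQ).map (N'.comap N.subtype).mkQ = W :=
      Submodule.map_comap_eq_of_surjective (N'.comap N.subtype).mkQ_surjective W
    have hquot : associatedPrimes R (↥N ⧸ W.comap (N'.comap N.subtype).mkQ) = {p} := by
      rw [← LinearEquiv.AssociatedPrimes.eq
        (Submodule.quotientQuotientEquivQuotient (N'.comap N.subtype)
          (W.comap (N'.comap N.subtype).mkQ) hL0L), hmapL, hW]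
    have hLne : W.comap (N'.comap N.subtype).mkQ ≠ ⊤ := by
      intro h
      rw [h] at hquot
      rw [associatedPrimes.eq_empty_of_subsingleton] at hquot
      exact Set.notMem_empty p (hquot ▸ rfl)
    refine ⟨(W.comap (N'.comap N.subtype).mkQ).map N.subtype, ?_, ?_, ?_⟩
    · have hN'eq : N' = (N'.comap N.subtype).map N.subtype := by
        rw [Submodule.map_comap_subtype, inf_eq_right.mpr hN'N.le]
      exact le_trans (le_of_eq hN'eq) (Submodule.map_mono hL0L)
    · refine lt_of_le_of_ne (Submodule.map_subtype_le N _) ?_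
      intro h
      apply hLne
      have h2 := congrArg (Submodule.comap N.subtype) h
      rwa [Submodule.comap_map_eq_of_injective N.injective_subtype,
        Submodule.comap_subtype_self] at h2
    · rw [Submodule.comap_map_eq_of_injective N.injective_subtype]
      exact hquot
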